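/- arXiv:1903.08554 — 7 statements merged into one kernel-verified Lean document; each statement's English description precedes it below -/
import Mathlib

section
/- There exists a universal constant C > 0 such that the following holds. Let N ≥ 1, d > 0, and let X_1, …, X_N ∈ ℝ³ satisfy |X_i − X_j| ≥ d for all i ≠ j. Let x ∈ ℝ³ and let i ∈ {1, …, N} be such that |x − X_i| ≤ |x − X_j| for all j ∈ {1, …, N}. Then ∑_{j ≠ i} 1/|x − X_j| ≤ C N^{2/3} / d. -/
set_option maxHeartbeats 1000000

open Finset Metric MeasureTheory ENNReal

lemma packing_count {N : ℕ} {d : ℝ} (hd : 0 < d) (X : Fin N → EuclideanSpace ℝ (Fin 3))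
    (hsep : ∀ i j, i ≠ j → d ≤ ‖X i - X j‖) (x : EuclideanSpace ℝ (Fin 3))
    {R : ℝ} (hR : 0 ≤ R) :
    ((Finset.univ.filter (fun j => ‖x - X j‖ ≤ R)).card : ℝ) * (d/2)^3 ≤ (R + d/2)^3 := by
  set t := Finset.univ.filter (fun j : Fin N => ‖x - X j‖ ≤ R) with ht
  have hd2 : (0:ℝ) ≤ d / 2 := by linarith
  have hdisj : (↑t : Set (Fin N)).PairwiseDisjoint (fun j => ball (X j) (d/2)) := by
    intro a _ b _ hab
    apply ball_disjoint_ball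
    rw [dist_eq_norm]
    linarith [hsep a b hab]
  have hsub : (⋃ j ∈ t, ball (X j) (d/2)) ⊆ ball x (R + d/2) := by
    intro y hy
    simp only [Set.mem_iUnion] at hy
    obtain ⟨j, hj, hyj⟩ := hy
    have hjR : ‖x - X j‖ ≤ R := (Finset.mem_filter.mp hj).2
    rw [mem_ball] at hyj ⊢
    linarith [dist_triangle y (X j) x, (by rw [dist_eq_norm] : dist y (X j) = ‖y - X j‖),
      (by rw [dist_eq_norm, norm_sub_rev] : dist (X j) x = ‖x - X j‖)]
  have hvol : ∀ z : EuclideanSpace ℝ (Fin 3), ∀ r : ℝ, 0 ≤ r →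
      volume (ball z r) = ENNReal.ofReal (r ^ 3) * volume (ball (0:EuclideanSpace ℝ (Fin 3)) 1) := by
    intro z r hr
    rw [Measure.addHaar_ball volume z hr, finrank_euclideanSpace_fin]
  have hsum : ∑ j ∈ t, volume (ball (X j) (d/2)) ≤ volume (ball x (R + d/2)) := by
    rw [← measure_biUnion_finset hdisj (fun j _ => measurableSet_ball)]
    exact measure_mono hsub
  rw [Finset.sum_congr rfl (fun j _ => hvol (X j) (d/2) hd2), Finset.sum_const, nsmul_eq_mul,
    hvol x (R + d/2) (by linarith)] at hsum
  have hc0 : volume (ball (0:EuclideanSpace ℝ (Fin 3)) 1) ≠ 0 :=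
    (measure_ball_pos volume _ one_pos).ne'
  have hctop : volume (ball (0:EuclideanSpace ℝ (Fin 3)) 1) ≠ ⊤ :=
    measure_ball_lt_top.ne
  rw [← mul_assoc] at hsum
  have key : (t.card : ℝ≥0∞) * ENNReal.ofReal ((d/2) ^ 3) ≤ ENNReal.ofReal ((R + d/2) ^ 3) :=
    (ENNReal.mul_le_mul_iff_left hc0 hctop).mp hsum
  have : ENNReal.ofReal ((t.card : ℝ) * (d/2)^3) ≤ ENNReal.ofReal ((R + d/2) ^ 3) := by
    rw [ENNReal.ofReal_mul (by positivity), ENNReal.ofReal_natCast]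
    exact key
  exact (ENNReal.ofReal_le_ofReal_iff (by positivity)).mp this

theorem sum_inv_dist_le :
    ∃ C : ℝ, 0 < C ∧
      ∀ (N : ℕ), 1 ≤ N → ∀ (d : ℝ), 0 < d →
        ∀ X : Fin N → EuclideanSpace ℝ (Fin 3),
          (∀ i j : Fin N, i ≠ j → d ≤ ‖X i - X j‖) →
          ∀ (x : EuclideanSpace ℝ (Fin 3)) (i : Fin N),
            (∀ j : Fin N, ‖x - X i‖ ≤ ‖x - X j‖) →
            ∑ j ∈ Finset.univ.erase i, 1 / ‖x - X j‖ ≤ C * (N : ℝ) ^ ((2:ℝ)/3) / d := by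
  classical
  refine ⟨2050, by norm_num, ?_⟩
  intro N hN d hd X hsep x i hmin
  set r : Fin N → ℝ := fun j => ‖x - X j‖ with hrdef
  set p : ℝ := (N:ℝ) ^ ((1:ℝ)/3) with hpdef
  have hN1 : (1:ℝ) ≤ (N:ℝ) := by exact_mod_cast hN
  have hp1 : 1 ≤ p := Real.one_le_rpow hN1 (by norm_num)
  have hp0 : 0 < p := by linarith
  have hp3 : p ^ (3:ℕ) = (N:ℝ) := by
    rw [hpdef, ← Real.rpow_natCast ((N:ℝ) ^ ((1:ℝ)/3)) 3, ← Real.rpow_mul (Nat.cast_nonneg N)]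
    norm_num
  have hp2 : p ^ (2:ℕ) = (N:ℝ) ^ ((2:ℝ)/3) := by
    rw [hpdef, ← Real.rpow_natCast ((N:ℝ) ^ ((1:ℝ)/3)) 2, ← Real.rpow_mul (Nat.cast_nonneg N)]
    norm_num
  have hhalf : ∀ j : Fin N, j ≠ i → d / 2 ≤ r j := by
    intro j hj
    have key : ‖X i - X j‖ ≤ ‖x - X i‖ + ‖x - X j‖ := by
      calc ‖X i - X j‖ = ‖(X i - x) + (x - X j)‖ := by rw [sub_add_sub_cancel]
        _ ≤ ‖X i - x‖ + ‖x - X j‖ := norm_add_le _ _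
        _ = ‖x - X i‖ + ‖x - X j‖ := by rw [norm_sub_rev]
    have h1 := hsep i j (Ne.symm hj)
    have h2 := hmin j
    simp only [hrdef]
    linarith
  have hrpos : ∀ j : Fin N, j ≠ i → 0 < r j := fun j hj => lt_of_lt_of_le (by linarith) (hhalf j hj)
  have hcount : ∀ R : ℝ, 0 ≤ R → ∀ s : Finset (Fin N), (∀ j ∈ s, r j ≤ R) →
      (s.card : ℝ) * (d/2)^3 ≤ (R + d/2)^3 := by
    intro R hR s hs
    have hsub : s ⊆ Finset.univ.filter (fun j => ‖x - X j‖ ≤ R) := fun j hj =>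
      Finset.mem_filter.mpr ⟨Finset.mem_univ _, hs j hj⟩
    have h1 : (s.card : ℝ) ≤ ((Finset.univ.filter (fun j => ‖x - X j‖ ≤ R)).card : ℝ) := by
      exact_mod_cast Finset.card_le_card hsub
    have h2 := packing_count hd X hsep x hR
    nlinarith [pow_pos (by linarith : (0:ℝ) < d/2) 3]
  set M : ℕ := Nat.clog 2 ⌈p⌉₊ with hMdef
  have h2M : (0:ℝ) < (2:ℝ)^M := by positivity
  have hpM : p ≤ (2:ℝ)^M := by
    have h1 : (⌈p⌉₊ : ℝ) ≤ ((2^M : ℕ) : ℝ) := by exact_mod_cast Nat.le_pow_clog one_lt_two ⌈p⌉₊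
    push_cast at h1
    linarith [Nat.le_ceil p]
  have hM4p : (2:ℝ)^M ≤ 4 * p := by
    have hceil1 : 1 ≤ ⌈p⌉₊ := Nat.one_le_ceil_iff.mpr hp0
    rcases eq_or_lt_of_le hceil1 with h | h
    · rw [hMdef, ← h, Nat.clog_one_right]
      norm_num
      linarith
    · have h1 : (2:ℕ) ^ (M - 1) < ⌈p⌉₊ := Nat.pow_pred_clog_lt_self one_lt_two h
      have h2 : (2:ℕ)^M ≤ 2 * 2^(M-1) := by
        have hMle : M ≤ (M-1) + 1 := by omega
        calc (2:ℕ)^M ≤ 2^((M-1)+1) := Nat.pow_le_pow_right (by norm_num) hMle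
          _ = 2 * 2^(M-1) := by ring
      have h3 : (2:ℕ)^M ≤ 2 * ⌈p⌉₊ := by omega
      have h4 : ((2:ℕ)^M : ℝ) ≤ 2 * (⌈p⌉₊ : ℝ) := by exact_mod_cast h3
      have h5 : (⌈p⌉₊ : ℝ) < p + 1 := Nat.ceil_lt_add_one (le_of_lt hp0)
      push_cast at h4
      linarith
  set T : ℝ := d/2 * 2^M with hTdef
  set s : Finset (Fin N) := Finset.univ.erase i with hsdef
  have hsplit := Finset.sum_filter_add_sum_filter_not s (fun j => r j < T) (fun j => 1 / r j)
  have hbig : ∑ j ∈ s.filter (fun j => ¬ r j < T), 1 / r j ≤ 2 * p^(2:ℕ) / d := by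
    have hterm : ∀ j ∈ s.filter (fun j => ¬ r j < T), 1 / r j ≤ 2 / (d * p) := by
      intro j hj
      obtain ⟨hjs, hjT⟩ := Finset.mem_filter.mp hj
      have hji : j ≠ i := Finset.ne_of_mem_erase hjs
      have hrj : d/2 * p ≤ r j := by
        have hTr : T ≤ r j := not_lt.mp hjT
        have hpT : d/2 * p ≤ T := by
          rw [hTdef]
          have := mul_le_mul_of_nonneg_left hpM (by linarith : (0:ℝ) ≤ d/2)
          linarith
        linarith
      rw [div_le_div_iff₀ (hrpos j hji) (by positivity)]
      linarith
    calc ∑ j ∈ s.filter (fun j => ¬ r j < T), 1 / r j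
        ≤ (s.filter (fun j => ¬ r j < T)).card • (2 / (d * p)) :=
          Finset.sum_le_card_nsmul _ _ _ hterm
      _ = ((s.filter (fun j => ¬ r j < T)).card : ℝ) * (2 / (d * p)) := by rw [nsmul_eq_mul]
      _ ≤ (N : ℝ) * (2 / (d * p)) := by
          have h1 : (s.filter (fun j => ¬ r j < T)).card ≤ N := by
            calc (s.filter (fun j => ¬ r j < T)).card ≤ s.card := Finset.card_filter_le _ _
              _ ≤ Finset.univ.card := Finset.card_le_card (Finset.erase_subset _ _)
              _ = N := by simp
          have h2 : ((s.filter (fun j => ¬ r j < T)).card : ℝ) ≤ (N:ℝ) := by exact_mod_cast h1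
          exact mul_le_mul_of_nonneg_right h2 (by positivity)
      _ = 2 * p^(2:ℕ) / d := by
          rw [← hp3]
          field_simp
  have hsmall : ∑ j ∈ s.filter (fun j => r j < T), 1 / r j ≤ 2048 * p^(2:ℕ) / d := by
    set g : Fin N → ℕ := fun j => Nat.log 2 ⌊2 * r j / d⌋₊ with hgdef
    set ss := s.filter (fun j => r j < T) with hssdef
    have hk1 : ∀ j ∈ ss, 1 ≤ ⌊2 * r j / d⌋₊ := by
      intro j hj
      obtain ⟨hjs, hjT⟩ := Finset.mem_filter.mp hj
      have hji : j ≠ i := Finset.ne_of_mem_erase hjs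
      have := hhalf j hji
      apply Nat.le_floor
      rw [Nat.cast_one, le_div_iff₀ hd]
      linarith
    have hmaps : ∀ j ∈ ss, g j ∈ Finset.range M := by
      intro j hj
      have hk := hk1 j hj
      obtain ⟨hjs, hjT⟩ := Finset.mem_filter.mp hj
      have hkub : ⌊2 * r j / d⌋₊ < 2^M := by
        have h1 : (⌊2 * r j / d⌋₊ : ℝ) ≤ 2 * r j / d := Nat.floor_le (by positivity)
        have h2 : 2 * r j / d < (2:ℝ)^M := by
          rw [div_lt_iff₀ hd]
          rw [hTdef] at hjT
          nlinarith
        have h3 : (⌊2 * r j / d⌋₊ : ℝ) < ((2^M : ℕ) : ℝ) := by push_cast; linarith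
        exact_mod_cast h3
      rw [Finset.mem_range, hgdef]
      exact Nat.log_lt_of_lt_pow (by omega) hkub
    rw [← Finset.sum_fiberwise_of_maps_to hmaps]
    have hinner : ∀ m ∈ Finset.range M,
        ∑ j ∈ ss.filter (fun j => g j = m), 1 / r j ≤ 128 * 4^m / d := by
      intro m hm
      set F := ss.filter (fun j => g j = m) with hFdef
      have h2m : (0:ℝ) < (2:ℝ)^m := by positivity
      have hrlow : ∀ j ∈ F, d/2 * 2^m ≤ r j := by
        intro j hj
        obtain ⟨hjss, hjg⟩ := Finset.mem_filter.mp hj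
        have hk := hk1 j hjss
        have h1 : (2:ℕ)^m ≤ ⌊2 * r j / d⌋₊ := by
          rw [← hjg, hgdef]
          exact Nat.pow_log_le_self 2 (by omega)
        have h2 : ((2:ℕ)^m : ℝ) ≤ (⌊2 * r j / d⌋₊ : ℝ) := by exact_mod_cast h1
        have h3 : (⌊2 * r j / d⌋₊ : ℝ) ≤ 2 * r j / d := Nat.floor_le (by positivity)
        push_cast at h2
        have h4 : (2:ℝ)^m ≤ 2 * r j / d := le_trans h2 h3
        rw [le_div_iff₀ hd] at h4
        nlinarith
      have hrup : ∀ j ∈ F, r j ≤ d * 2^m := by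
        intro j hj
        obtain ⟨hjss, hjg⟩ := Finset.mem_filter.mp hj
        have h1 : ⌊2 * r j / d⌋₊ < 2^(m+1) := by
          rw [← hjg, hgdef]
          exact Nat.lt_pow_succ_log_self one_lt_two _
        have h2 : 2 * r j / d < (⌊2 * r j / d⌋₊ : ℝ) + 1 := Nat.lt_floor_add_one _
        have h3 : ((⌊2 * r j / d⌋₊ : ℝ) + 1) ≤ ((2:ℕ)^(m+1) : ℝ) := by exact_mod_cast h1
        push_cast at h3
        have h4 : 2 * r j / d < (2:ℝ)^(m+1) := lt_of_lt_of_le h2 h3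
        rw [div_lt_iff₀ hd, pow_succ] at h4
        nlinarith
      have hcard : (F.card : ℝ) ≤ 64 * ((2:ℝ)^m)^(3:ℕ) := by
        have h1 := hcount (d * 2^m) (by positivity) F hrup
        have h2 : d * 2^m + d/2 ≤ d/2 * 2^(m+2) := by
          have h3 : (1:ℝ) ≤ (2:ℝ)^m := one_le_pow₀ (by norm_num)
          rw [pow_add]
          nlinarith
        have h4 : (d * 2^m + d/2)^(3:ℕ) ≤ (d/2 * 2^(m+2))^(3:ℕ) :=
          pow_le_pow_left₀ (by positivity) h2 3
        have h5 : (d/2 * 2^(m+2))^(3:ℕ) = 64 * ((2:ℝ)^m)^(3:ℕ) * (d/2)^(3:ℕ) := by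
          rw [pow_add]; ring
        have h6 : (F.card : ℝ) * (d/2)^(3:ℕ) ≤ 64 * ((2:ℝ)^m)^(3:ℕ) * (d/2)^(3:ℕ) := by
          rw [← h5]; exact le_trans h1 h4
        exact le_of_mul_le_mul_right h6 (by positivity)
      have hterm : ∀ j ∈ F, 1 / r j ≤ 2 / (d * 2^m) := by
        intro j hj
        have hjss := (Finset.mem_filter.mp hj).1
        have hji : j ≠ i := Finset.ne_of_mem_erase (Finset.mem_filter.mp hjss).1
        have := hrlow j hj
        rw [div_le_div_iff₀ (hrpos j hji) (by positivity)]
        linarith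
      have h4m : (4:ℝ)^m = ((2:ℝ)^m)^(2:ℕ) := by
        rw [← pow_mul, mul_comm m 2, pow_mul]
        norm_num
      calc ∑ j ∈ F, 1 / r j ≤ F.card • (2 / (d * 2^m)) := Finset.sum_le_card_nsmul _ _ _ hterm
        _ = (F.card : ℝ) * (2 / (d * 2^m)) := by rw [nsmul_eq_mul]
        _ ≤ 64 * ((2:ℝ)^m)^(3:ℕ) * (2 / (d * 2^m)) :=
            mul_le_mul_of_nonneg_right hcard (by positivity)
        _ = 128 * 4^m / d := by
            rw [h4m]
            field_simp
            ring
    calc ∑ m ∈ Finset.range M, ∑ j ∈ ss.filter (fun j => g j = m), 1 / r j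
        ≤ ∑ m ∈ Finset.range M, 128 * 4^m / d := Finset.sum_le_sum hinner
      _ = (128/d) * ∑ m ∈ Finset.range M, (4:ℝ)^m := by
          rw [Finset.mul_sum]
          exact Finset.sum_congr rfl fun m _ => by ring
      _ ≤ (128/d) * (4:ℝ)^M := by
          have hg : ∑ m ∈ Finset.range M, (4:ℝ)^m = ((4:ℝ)^M - 1)/(4-1) :=
            geom_sum_eq (by norm_num : (4:ℝ) ≠ 1) M
          have h4M : (1:ℝ) ≤ 4^M := one_le_pow₀ (by norm_num)
          rw [hg]
          exact mul_le_mul_of_nonneg_left (by linarith) (by positivity)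
      _ ≤ 2048 * p^(2:ℕ) / d := by
          have h4M : (4:ℝ)^M = ((2:ℝ)^M)^(2:ℕ) := by
            rw [← pow_mul, mul_comm M 2, pow_mul]
            norm_num
          have h1 : ((2:ℝ)^M)^(2:ℕ) ≤ (4*p)^(2:ℕ) := pow_le_pow_left₀ (le_of_lt h2M) hM4p 2
          have h2 : ((2:ℝ)^M)^(2:ℕ) ≤ 16 * p^(2:ℕ) := by nlinarith
          calc (128/d) * (4:ℝ)^M = (128/d) * ((2:ℝ)^M)^(2:ℕ) := by rw [h4M]
            _ ≤ (128/d) * (16 * p^(2:ℕ)) := mul_le_mul_of_nonneg_left h2 (by positivity)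
            _ = 2048 * p^(2:ℕ) / d := by ring
  have hfinal : ∑ j ∈ s, 1 / r j ≤ 2050 * p^(2:ℕ) / d := by
    rw [← hsplit]
    refine le_trans (add_le_add hsmall hbig) (le_of_eq ?_)
    ring
  calc ∑ j ∈ Finset.univ.erase i, 1 / ‖x - X j‖ = ∑ j ∈ s, 1 / r j := rfl
    _ ≤ 2050 * p^(2:ℕ) / d := hfinal
    _ = 2050 * (N:ℝ) ^ ((2:ℝ)/3) / d := by rw [hp2]
end

section
/- There exists a universal constant C > 0 such that the following holds. Let N ≥ 1, d > 0, and let X_1, …, X_N ∈ ℝ³ satisfy |X_i − X_j| ≥ d for all i ≠ j. Let x ∈ ℝ³ and let i ∈ {1, …, N} be such that |x − X_i| ≤ |x − X_j| for all j ∈ {1, …, N}. Then ∑_{j ≠ i} 1/|x − X_j|² ≤ C N^{1/3} / d². -/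
open Finset Metric MeasureTheory Module
open scoped ENNReal

-- Sum of k^{-2/3} bound:  ∑_{k=1}^n k^{-2/3} ≤ 3 n^{1/3}
lemma sum_rpow_aux (n : ℕ) :
    ∑ k ∈ Finset.range n, ((k + 1 : ℕ) : ℝ) ^ (-(2:ℝ)/3) ≤ 3 * (n : ℝ) ^ ((1:ℝ)/3) := by
  induction n with
  | zero => simp
  | succ n ih =>
    rw [Finset.sum_range_succ]
    set a : ℝ := (n : ℝ) with ha
    have ha0 : 0 ≤ a := Nat.cast_nonneg n
    have hb0 : (0:ℝ) < a + 1 := by positivity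
    have hgm : a ^ ((1:ℝ)/3) * (a+1) ^ ((2:ℝ)/3) ≤ (1/3) * a + (2/3) * (a+1) :=
      Real.geom_mean_le_arith_mean2_weighted (by norm_num) (by norm_num) ha0 hb0.le (by norm_num)
    have h2 : (0:ℝ) < (a+1) ^ ((2:ℝ)/3) := Real.rpow_pos_of_pos hb0 _
    have h3 : (a+1) ^ (-(2:ℝ)/3) * (a+1) ^ ((2:ℝ)/3) = 1 := by
      rw [← Real.rpow_add hb0]; norm_num
    have h4 : (a+1) ^ ((1:ℝ)/3) * (a+1) ^ ((2:ℝ)/3) = a + 1 := by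
      rw [← Real.rpow_add hb0]; norm_num
    have key : ((n + 1 : ℕ) : ℝ) ^ (-(2:ℝ)/3) ≤ 3 * ((a+1) ^ ((1:ℝ)/3) - a ^ ((1:ℝ)/3)) := by
      push_cast
      nlinarith [h2, h3, h4, hgm]
    have hcast : ((n + 1 : ℕ) : ℝ) = a + 1 := by push_cast; ring
    rw [hcast] at key ⊢
    linarith [ih, key]

-- Packing lemma: d-separated points within distance R of x number at most (2R/d+1)^3 / ... :
lemma packing_lemma {ι : Type*} (d R : ℝ) (hd : 0 < d) (hR : 0 ≤ R) (t : Finset ι)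
    (Y : ι → EuclideanSpace ℝ (Fin 3))
    (hsep : ∀ j ∈ t, ∀ l ∈ t, j ≠ l → d ≤ ‖Y j - Y l‖)
    (x : EuclideanSpace ℝ (Fin 3)) (hRx : ∀ j ∈ t, ‖x - Y j‖ ≤ R) :
    (t.card : ℝ) * (d/2)^3 ≤ (R + d/2)^3 := by
  set μ : Measure (EuclideanSpace ℝ (Fin 3)) := volume
  have hd2 : (0:ℝ) < d / 2 := by linarith
  -- the balls are pairwise disjoint
  have hdisj : (t : Set ι).PairwiseDisjoint (fun j => ball (Y j) (d/2)) := by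
    intro j hj l hl hjl
    apply Set.disjoint_left.2
    intro y hyj hyl
    have h1 : dist y (Y j) < d/2 := mem_ball.1 hyj
    have h2 : dist y (Y l) < d/2 := mem_ball.1 hyl
    have h3 : d ≤ dist (Y j) (Y l) := by
      simpa [dist_eq_norm] using hsep j hj l hl hjl
    have := dist_triangle (Y j) y (Y l)
    rw [dist_comm (Y j) y] at this
    linarith
  have hsub : (⋃ j ∈ t, ball (Y j) (d/2)) ⊆ ball x (R + d/2) := by
    intro y hy
    simp only [Set.mem_iUnion] at hy
    obtain ⟨j, hj, hyj⟩ := hy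
    have h1 : dist y (Y j) < d/2 := mem_ball.1 hyj
    have h2 : dist x (Y j) ≤ R := by simpa [dist_eq_norm] using hRx j hj
    have := dist_triangle y (Y j) x
    rw [dist_comm (Y j) x] at this
    exact mem_ball.2 (by linarith)
  have hmeas : ∑ j ∈ t, μ (ball (Y j) (d/2)) = μ (⋃ j ∈ t, ball (Y j) (d/2)) :=
    (measure_biUnion_finset hdisj fun _ _ => measurableSet_ball).symm
  have hfin : finrank ℝ (EuclideanSpace ℝ (Fin 3)) = 3 := finrank_euclideanSpace_fin
  have hball : ∀ z : EuclideanSpace ℝ (Fin 3), ∀ r : ℝ, 0 < r →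
      μ (ball z r) = ENNReal.ofReal (r ^ 3) * μ (ball 0 1) := by
    intro z r hr
    rw [Measure.addHaar_ball_of_pos μ z hr, hfin]
  have hB0 : μ (ball (0 : EuclideanSpace ℝ (Fin 3)) 1) ≠ 0 :=
    (measure_ball_pos μ 0 one_pos).ne'
  have hBt : μ (ball (0 : EuclideanSpace ℝ (Fin 3)) 1) ≠ ⊤ := measure_ball_lt_top.ne
  have hle : (t.card : ℝ≥0∞) * (ENNReal.ofReal ((d/2) ^ 3) * μ (ball 0 1))
      ≤ ENNReal.ofReal ((R + d/2) ^ 3) * μ (ball 0 1) := by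
    calc (t.card : ℝ≥0∞) * (ENNReal.ofReal ((d/2) ^ 3) * μ (ball 0 1))
        = ∑ j ∈ t, μ (ball (Y j) (d/2)) := by
          rw [Finset.sum_congr rfl fun j _ => hball (Y j) (d/2) hd2]
          rw [Finset.sum_const, nsmul_eq_mul]
      _ = μ (⋃ j ∈ t, ball (Y j) (d/2)) := hmeas
      _ ≤ μ (ball x (R + d/2)) := measure_mono hsub
      _ = ENNReal.ofReal ((R + d/2) ^ 3) * μ (ball 0 1) := hball x _ (by linarith)
  rw [← mul_assoc, ENNReal.mul_le_mul_iff_left hB0 hBt, ← ENNReal.ofReal_natCast,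
    ← ENNReal.ofReal_mul (by positivity)] at hle
  have := ENNReal.ofReal_le_ofReal_iff (by positivity : (0:ℝ) ≤ (R + d/2)^3) |>.1 hle
  exact this

-- Counting sum lemma: if each term is weighted by how many values are below it,
-- the sum is dominated by the sorted sum.
lemma count_sum {ι : Type*} [DecidableEq ι] (f : ℕ → ℝ)
    (hf : ∀ a b : ℕ, 1 ≤ a → a ≤ b → f b ≤ f a) :
    ∀ (n : ℕ) (s : Finset ι) (r : ι → ℝ), s.card = n →
      ∑ j ∈ s, f ((s.filter fun l => r l ≤ r j).card) ≤ ∑ k ∈ Finset.range n, f (k + 1) := by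
  intro n
  induction n with
  | zero =>
    intro s r hs
    rw [Finset.card_eq_zero.1 hs]
    simp
  | succ n ih =>
    intro s r hs
    have hne : s.Nonempty := by rw [← Finset.card_pos, hs]; omega
    obtain ⟨j₀, hj₀, hmax⟩ := s.exists_max_image r hne
    have hfilter : s.filter (fun l => r l ≤ r j₀) = s :=
      Finset.filter_eq_self.2 fun l hl => hmax l hl
    have hs' : (s.erase j₀).card = n := by rw [Finset.card_erase_of_mem hj₀, hs]; omega
    have step : ∀ j ∈ s.erase j₀,
        f ((s.filter fun l => r l ≤ r j).card) ≤
          f (((s.erase j₀).filter fun l => r l ≤ r j).card) := by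
      intro j hj
      apply hf
      · refine Finset.card_pos.2 ⟨j, Finset.mem_filter.2 ⟨hj, le_refl _⟩⟩
      · exact Finset.card_le_card (Finset.filter_subset_filter _ (Finset.erase_subset _ _))
    calc ∑ j ∈ s, f ((s.filter fun l => r l ≤ r j).card)
        = f ((s.filter fun l => r l ≤ r j₀).card)
            + ∑ j ∈ s.erase j₀, f ((s.filter fun l => r l ≤ r j).card) :=
          (Finset.add_sum_erase s _ hj₀).symm
      _ ≤ f (n + 1) + ∑ j ∈ s.erase j₀, f (((s.erase j₀).filter fun l => r l ≤ r j).card) := by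
          rw [hfilter, hs]
          exact add_le_add_right (Finset.sum_le_sum step) _
      _ ≤ f (n + 1) + ∑ k ∈ Finset.range n, f (k + 1) :=
          add_le_add_right (ih _ _ hs') _
      _ = ∑ k ∈ Finset.range (n + 1), f (k + 1) := by rw [Finset.sum_range_succ]; ring

set_option maxHeartbeats 1000000 in
theorem sum_inv_dist_sq_le :
    ∃ C : ℝ, 0 < C ∧
      ∀ (N : ℕ), 1 ≤ N → ∀ (d : ℝ), 0 < d →
        ∀ X : Fin N → EuclideanSpace ℝ (Fin 3),
          (∀ i j : Fin N, i ≠ j → d ≤ ‖X i - X j‖) →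
          ∀ (x : EuclideanSpace ℝ (Fin 3)) (i : Fin N),
            (∀ j : Fin N, ‖x - X i‖ ≤ ‖x - X j‖) →
            ∑ j ∈ Finset.univ.erase i, 1 / ‖x - X j‖ ^ 2 ≤ C * (N : ℝ) ^ ((1:ℝ)/3) / d ^ 2 := by
  classical
  refine ⟨48, by norm_num, ?_⟩
  intro N hN d hd X hsep x i hclosest
  set r : Fin N → ℝ := fun j => ‖x - X j‖ with hrdef
  set s : Finset (Fin N) := Finset.univ.erase i with hsdef
  have hd2 : ∀ j ∈ s, d / 2 ≤ r j := by
    intro j hj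
    have hji : j ≠ i := Finset.ne_of_mem_erase hj
    have h1 : d ≤ ‖X i - X j‖ := hsep i j (Ne.symm hji)
    have h2 : ‖X i - X j‖ ≤ ‖x - X j‖ + ‖x - X i‖ := by
      have he : X i - X j = (x - X j) - (x - X i) := by abel
      rw [he]; exact norm_sub_le _ _
    have h3 := hclosest j
    simp only [r]
    linarith
  have hrpos : ∀ j ∈ s, 0 < r j := fun j hj => lt_of_lt_of_le (by linarith) (hd2 j hj)
  -- pointwise bound using the packing lemma
  have hpoint : ∀ j ∈ s, 1 / r j ^ 2 ≤
      16 / d ^ 2 * (((s.filter fun l => r l ≤ r j).card : ℝ)) ^ (-(2:ℝ)/3) := by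
    intro j hj
    set t : Finset (Fin N) := insert i (s.filter fun l => r l ≤ r j) with htdef
    have hit : i ∉ s.filter fun l => r l ≤ r j := by
      intro h
      exact (Finset.notMem_erase i Finset.univ) (Finset.mem_of_mem_filter i h)
    set c : ℕ := (s.filter fun l => r l ≤ r j).card with hcdef
    have htcard : t.card = c + 1 := by rw [htdef, Finset.card_insert_of_notMem hit]
    have hc1 : 1 ≤ c := Finset.card_pos.2 ⟨j, Finset.mem_filter.2 ⟨hj, le_refl _⟩⟩
    have hrj : 0 < r j := hrpos j hj
    have hpack : (t.card : ℝ) * (d/2)^3 ≤ (r j + d/2)^3 := by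
      apply packing_lemma d (r j) hd hrj.le t X
      · intro a _ b _ hab
        exact hsep a b hab
      · intro l hl
        rcases Finset.mem_insert.1 hl with h | h
        · rw [h]; exact hclosest j
        · exact (Finset.mem_filter.1 h).2
    have hrd : d / 2 ≤ r j := hd2 j hj
    -- hence r j ^ 3 ≥ c * d^3 / 64
    have hcube : (c : ℝ) * d ^ 3 ≤ 64 * r j ^ 3 := by
      rw [htcard] at hpack
      push_cast at hpack
      have h7 : r j + d/2 ≤ 2 * r j := by linarith
      have h8 : (r j + d/2)^3 ≤ (2 * r j)^3 := pow_le_pow_left₀ (by positivity) h7 3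
      have h9 : ((2:ℝ) * r j)^3 = 8 * r j ^ 3 := by ring
      have h10 : ((d:ℝ)/2)^3 = d^3/8 := by ring
      have h11 : (0:ℝ) < d ^ 3 := by positivity
      rw [h9] at h8
      rw [h10] at hpack
      nlinarith [hpack, h8, h11]
    set u : ℝ := (c : ℝ) with hudef
    have hu1 : (1:ℝ) ≤ u := by rw [hudef]; exact_mod_cast hc1
    have hu0 : (0:ℝ) < u := by linarith
    have hu23 : (u ^ ((2:ℝ)/3)) ^ 3 = u ^ 2 := by
      rw [← Real.rpow_natCast (u ^ ((2:ℝ)/3)) 3, ← Real.rpow_mul hu0.le]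
      norm_num
    have hA : (0:ℝ) < u ^ ((2:ℝ)/3) := Real.rpow_pos_of_pos hu0 _
    have key : u ^ ((2:ℝ)/3) * d ^ 2 ≤ 16 * r j ^ 2 := by
      have h6 : (u ^ ((2:ℝ)/3) * d ^ 2) ^ 3 ≤ (16 * r j ^ 2) ^ 3 := by
        rw [mul_pow, hu23]
        have hsq : (u * d^3) * (u * d^3) ≤ (64 * r j ^3) * (64 * r j ^3) :=
          mul_le_mul hcube hcube (by positivity) (by positivity)
        nlinarith [hsq]
      exact le_of_pow_le_pow_left₀ (by norm_num) (by positivity) h6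
    have hneg : u ^ (-(2:ℝ)/3) = (u ^ ((2:ℝ)/3))⁻¹ := by
      rw [neg_div, Real.rpow_neg hu0.le]
    have hRR : 16 / d ^ 2 * (u ^ ((2:ℝ)/3))⁻¹ = 16 / (d ^ 2 * u ^ ((2:ℝ)/3)) := by
      rw [← div_eq_mul_inv, div_div]
    rw [hneg, hRR, div_le_div_iff₀ (by positivity) (by positivity)]
    rw [one_mul]
    linarith [key]
  have hsum1 : ∑ j ∈ s, 1 / r j ^ 2 ≤
      ∑ j ∈ s, 16 / d ^ 2 * (((s.filter fun l => r l ≤ r j).card : ℝ)) ^ (-(2:ℝ)/3) :=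
    Finset.sum_le_sum hpoint
  have hf : ∀ a b : ℕ, 1 ≤ a → a ≤ b →
      ((b : ℕ) : ℝ) ^ (-(2:ℝ)/3) ≤ ((a : ℕ) : ℝ) ^ (-(2:ℝ)/3) := by
    intro a b h1 hab
    apply Real.rpow_le_rpow_of_nonpos
    · exact_mod_cast h1.trans_lt' Nat.zero_lt_one
    · exact_mod_cast hab
    · norm_num
  have hsum2 := count_sum (fun m : ℕ => ((m : ℕ) : ℝ) ^ (-(2:ℝ)/3)) hf s.card s r rfl
  have hsum3 := sum_rpow_aux s.card
  have hcardN : ((s.card : ℕ) : ℝ) ≤ (N : ℝ) := by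
    have : s.card ≤ N := by simpa using Finset.card_le_univ s
    exact_mod_cast this
  have hmono : ((s.card : ℕ) : ℝ) ^ ((1:ℝ)/3) ≤ (N : ℝ) ^ ((1:ℝ)/3) :=
    Real.rpow_le_rpow (by positivity) hcardN (by norm_num)
  calc ∑ j ∈ s, 1 / r j ^ 2
      ≤ ∑ j ∈ s, 16 / d ^ 2 * (((s.filter fun l => r l ≤ r j).card : ℝ)) ^ (-(2:ℝ)/3) := hsum1
    _ = 16 / d ^ 2 * ∑ j ∈ s, (((s.filter fun l => r l ≤ r j).card : ℝ)) ^ (-(2:ℝ)/3) := by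
        rw [Finset.mul_sum]
    _ ≤ 16 / d ^ 2 * (3 * ((s.card : ℕ) : ℝ) ^ ((1:ℝ)/3)) := by
        apply mul_le_mul_of_nonneg_left _ (by positivity)
        exact hsum2.trans hsum3
    _ = 48 * ((s.card : ℕ) : ℝ) ^ ((1:ℝ)/3) / d ^ 2 := by ring
    _ ≤ 48 * (N : ℝ) ^ ((1:ℝ)/3) / d ^ 2 := by
        apply div_le_div_of_nonneg_right ?_ (by positivity)
        exact mul_le_mul_of_nonneg_left hmono (by norm_num)
end

section
/- There exists a universal constant C > 0 such that the following holds. Let N ≥ 2, d > 0, and let X_1, …, X_N ∈ ℝ³ satisfy |X_i − X_j| ≥ d for all i ≠ j. Let x ∈ ℝ³ and let i ∈ {1, …, N} be such that |x − X_i| ≤ |x − X_j| for all j ∈ {1, …, N}. Then ∑_{j ≠ i} 1/|x − X_j|³ ≤ C (log N) / d³. -/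
open Finset Metric MeasureTheory

lemma packing_card_le {ι : Type*} (s : Finset ι) (Y : ι → EuclideanSpace ℝ (Fin 3))
    {d : ℝ} (hd : 0 < d) (x : EuclideanSpace ℝ (Fin 3)) {R : ℝ} (hR : 0 ≤ R)
    (hsep : ∀ a ∈ s, ∀ b ∈ s, a ≠ b → d ≤ ‖Y a - Y b‖)
    (hball : ∀ a ∈ s, ‖x - Y a‖ ≤ R) :
    (s.card : ℝ) * (d / 2) ^ 3 ≤ (R + d / 2) ^ 3 := by
  set μ : Measure (EuclideanSpace ℝ (Fin 3)) := volume with hμ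
  have hdisj : (s : Set ι).PairwiseDisjoint (fun a => ball (Y a) (d / 2)) := by
    intro a ha b hb hab
    apply ball_disjoint_ball
    rw [dist_eq_norm]
    linarith [hsep a ha b hb hab]
  have hsub : (⋃ a ∈ s, ball (Y a) (d / 2)) ⊆ ball x (R + d / 2) := by
    intro z hz
    simp only [Set.mem_iUnion] at hz
    obtain ⟨a, ha, hz⟩ := hz
    rw [mem_ball] at hz ⊢
    have h1 : dist z x ≤ dist z (Y a) + dist (Y a) x := dist_triangle _ _ _
    have h2 : dist (Y a) x ≤ R := by
      rw [dist_eq_norm, ← norm_sub_rev]; exact hball a ha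
    linarith
  have hmeas := measure_biUnion_finset (μ := μ) hdisj (fun a _ => measurableSet_ball)
  have hle : (s.card : ENNReal) * μ (ball (0 : EuclideanSpace ℝ (Fin 3)) (d/2))
      ≤ μ (ball (0 : EuclideanSpace ℝ (Fin 3)) (R + d/2)) := by
    calc (s.card : ENNReal) * μ (ball (0 : EuclideanSpace ℝ (Fin 3)) (d/2))
        = ∑ a ∈ s, μ (ball (Y a) (d/2)) := by
          simp [Measure.addHaar_ball_center μ, Finset.sum_const, nsmul_eq_mul]
      _ = μ (⋃ a ∈ s, ball (Y a) (d/2)) := hmeas.symm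
      _ ≤ μ (ball x (R + d/2)) := measure_mono hsub
      _ = μ (ball (0 : EuclideanSpace ℝ (Fin 3)) (R + d/2)) :=
          Measure.addHaar_ball_center μ x _
  have h1 : μ (ball (0 : EuclideanSpace ℝ (Fin 3)) (d/2))
      = ENNReal.ofReal ((d/2)^3) * μ (ball 0 1) := by
    rw [Measure.addHaar_ball μ _ (by linarith : (0:ℝ) ≤ d/2), finrank_euclideanSpace_fin]
  have h2 : μ (ball (0 : EuclideanSpace ℝ (Fin 3)) (R + d/2))
      = ENNReal.ofReal ((R + d/2)^3) * μ (ball 0 1) := by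
    rw [Measure.addHaar_ball μ _ (by linarith : (0:ℝ) ≤ R + d/2), finrank_euclideanSpace_fin]
  rw [h1, h2, ← mul_assoc] at hle
  have hv0 : μ (ball (0 : EuclideanSpace ℝ (Fin 3)) 1) ≠ 0 :=
    (measure_ball_pos μ _ one_pos).ne'
  have hvt : μ (ball (0 : EuclideanSpace ℝ (Fin 3)) 1) ≠ ⊤ :=
    measure_ball_lt_top.ne
  rw [ENNReal.mul_le_mul_iff_left hv0 hvt] at hle
  rw [← ENNReal.ofReal_natCast, ← ENNReal.ofReal_mul (by positivity)] at hle
  exact (ENNReal.ofReal_le_ofReal_iff (by positivity)).mp hle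

lemma harmonic_tail_le_log (N : ℕ) (hN : 1 ≤ N) :
    ∑ m ∈ Finset.Icc 2 N, (1 : ℝ) / m ≤ Real.log N := by
  induction N with
  | zero => omega
  | succ n ih =>
    rcases Nat.lt_or_ge n 1 with hn | hn
    · interval_cases n
      simp
    · have hsum : ∑ m ∈ Finset.Icc 2 (n+1), (1:ℝ)/m
          = (∑ m ∈ Finset.Icc 2 n, (1:ℝ)/m) + 1/((n:ℝ)+1) := by
        rw [Finset.sum_Icc_succ_top (by omega : 2 ≤ n + 1)]
        push_cast; ring
      have h1 : (0:ℝ) < n := by exact_mod_cast hn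
      have h2 : (0:ℝ) < (n:ℝ) + 1 := by linarith
      have h3 := Real.log_le_sub_one_of_pos (show (0:ℝ) < (n:ℝ)/((n:ℝ)+1) by positivity)
      rw [Real.log_div h1.ne' h2.ne'] at h3
      have h4 : (n:ℝ)/((n:ℝ)+1) - 1 = -(1/((n:ℝ)+1)) := by field_simp; ring
      have h5 := ih hn
      have hcast : Real.log ((n:ℕ)+1 : ℕ) = Real.log ((n:ℝ)+1) := by push_cast; ring_nf
      rw [hsum, hcast]
      linarith

theorem sum_inv_dist_cube_le :
    ∃ C : ℝ, 0 < C ∧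
      ∀ (N : ℕ), 2 ≤ N → ∀ (d : ℝ), 0 < d →
        ∀ X : Fin N → EuclideanSpace ℝ (Fin 3),
          (∀ i j : Fin N, i ≠ j → d ≤ ‖X i - X j‖) →
          ∀ (x : EuclideanSpace ℝ (Fin 3)) (i : Fin N),
            (∀ j : Fin N, ‖x - X i‖ ≤ ‖x - X j‖) →
            ∑ j ∈ Finset.univ.erase i, 1 / ‖x - X j‖ ^ 3 ≤ C * Real.log N / d ^ 3 := by
  classical
  refine ⟨64, by norm_num, ?_⟩
  intro N hN d hd X hsep x i hclose
  set r : Fin N → ℝ := fun j => ‖x - X j‖ with hrdef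
  have hrlb : ∀ j : Fin N, j ≠ i → d / 2 ≤ r j := by
    intro j hj
    have h1 := hsep i j (Ne.symm hj)
    have h2 : ‖X i - X j‖ ≤ ‖X i - x‖ + ‖x - X j‖ := norm_sub_le_norm_sub_add_norm_sub _ _ _
    have h3 : ‖X i - x‖ = r i := by rw [norm_sub_rev]
    have h4 := hclose j
    simp only [hrdef] at *
    linarith [h2, h3 ▸ h2]
  have hrpos : ∀ j : Fin N, j ≠ i → 0 < r j := fun j hj =>
    lt_of_lt_of_le (by linarith) (hrlb j hj)
  -- lexicographic key and ranks
  let key : Fin N → ℝ ×ₗ Fin N := fun k => toLex (r k, k)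
  have hkeyinj : Function.Injective key := by
    intro a b h
    have := toLex.injective h
    exact congrArg Prod.snd this
  let t : Fin N → Finset (Fin N) := fun j => (univ.erase i).filter (fun k => key k ≤ key j)
  let n : Fin N → ℕ := fun j => (t j).card
  have hself : ∀ j ∈ univ.erase i, j ∈ t j := by
    intro j hj
    simp only [t, Finset.mem_filter]
    exact ⟨hj, le_refl _⟩
  have hr_of_key : ∀ k j : Fin N, key k ≤ key j → r k ≤ r j := by
    intro k j h
    rcases (Prod.Lex.le_iff).mp h with h' | h'
    · exact le_of_lt h'
    · exact le_of_eq h'.1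
  have hmono : ∀ j ∈ univ.erase i, ∀ j' ∈ univ.erase i, key j < key j' → n j < n j' := by
    intro j hj j' hj' hlt
    apply Finset.card_lt_card
    rw [Finset.ssubset_iff_of_subset]
    · exact ⟨j', hself j' hj', by
        simp only [t, Finset.mem_filter, not_and]
        intro _
        exact not_le_of_gt hlt⟩
    · intro k hk
      simp only [t, Finset.mem_filter] at hk ⊢
      exact ⟨hk.1, le_trans hk.2 (le_of_lt hlt)⟩
  have hninj : Set.InjOn (fun j => n j + 1) (univ.erase i : Set (Fin N)) := by
    intro a ha b hb hab
    have hab' : n a = n b := by simpa using hab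
    by_contra hne
    have hk : key a ≠ key b := fun h => hne (hkeyinj h)
    rcases lt_or_gt_of_ne hk with h | h
    · have := hmono a (by simpa using ha) b (by simpa using hb) h; omega
    · have := hmono b (by simpa using hb) a (by simpa using ha) h; omega
  -- packing bound per point
  have hpack : ∀ j ∈ univ.erase i, ((n j + 1 : ℕ) : ℝ) * d ^ 3 ≤ 64 * r j ^ 3 := by
    intro j hj
    have hji : j ≠ i := (Finset.mem_erase.mp hj).1
    have hit : i ∉ t j := by
      simp only [t, Finset.mem_filter, Finset.mem_erase]
      tauto
    have hcard : (insert i (t j)).card = n j + 1 := by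
      rw [Finset.card_insert_of_notMem hit]
    have hballs : ∀ a ∈ insert i (t j), ‖x - X a‖ ≤ r j := by
      intro a ha
      rcases Finset.mem_insert.mp ha with rfl | ha
      · exact hclose j
      · exact hr_of_key a j (Finset.mem_filter.mp ha).2
    have := packing_card_le (insert i (t j)) X hd x (norm_nonneg _)
      (fun a _ b _ hab => hsep a b hab) hballs
    rw [hcard] at this
    have hdr : d / 2 ≤ r j := hrlb j hji
    have h8 : (r j + d / 2) ^ 3 ≤ (2 * r j) ^ 3 := by
      apply pow_le_pow_left₀ (by positivity) (by linarith)
    nlinarith [this, h8]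
  -- per-term bound
  have hterm : ∀ j ∈ univ.erase i, 1 / r j ^ 3 ≤ 64 / d ^ 3 * (1 / ((n j + 1 : ℕ) : ℝ)) := by
    intro j hj
    have hji : j ≠ i := (Finset.mem_erase.mp hj).1
    have h1 := hpack j hj
    have hrp := hrpos j hji
    have hn1 : (0:ℝ) < ((n j + 1 : ℕ) : ℝ) := by positivity
    rw [div_mul_div_comm, mul_one, div_le_div_iff₀ (by positivity) (by positivity)]
    nlinarith [h1, pow_pos hrp 3, pow_pos hd 3]
  -- sum the rank bounds
  have hsum1 : ∑ j ∈ univ.erase i, (1 / ((n j + 1 : ℕ) : ℝ)) ≤ Real.log N := by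
    have himg : (univ.erase i).image (fun j => n j + 1) ⊆ Finset.Icc 2 N := by
      intro m hm
      obtain ⟨j, hj, rfl⟩ := Finset.mem_image.mp hm
      have h1 : 1 ≤ n j := Finset.card_pos.mpr ⟨j, hself j hj⟩
      have h2 : n j ≤ N - 1 := by
        have : t j ⊆ univ.erase i := Finset.filter_subset _ _
        have := Finset.card_le_card this
        simpa [Finset.card_erase_of_mem, Finset.card_univ] using this
      rw [Finset.mem_Icc]
      omega
    calc ∑ j ∈ univ.erase i, (1 / ((n j + 1 : ℕ) : ℝ))
        = ∑ m ∈ (univ.erase i).image (fun j => n j + 1), (1 / (m : ℝ)) := by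
          rw [Finset.sum_image (fun a ha b hb h => hninj (by simpa using ha) (by simpa using hb) h)]
      _ ≤ ∑ m ∈ Finset.Icc 2 N, (1 / (m : ℝ)) :=
          Finset.sum_le_sum_of_subset_of_nonneg himg (fun m _ _ => by positivity)
      _ ≤ Real.log N := harmonic_tail_le_log N (by omega)
  calc ∑ j ∈ univ.erase i, 1 / ‖x - X j‖ ^ 3
      ≤ ∑ j ∈ univ.erase i, 64 / d ^ 3 * (1 / ((n j + 1 : ℕ) : ℝ)) :=
        Finset.sum_le_sum hterm
    _ = 64 / d ^ 3 * ∑ j ∈ univ.erase i, (1 / ((n j + 1 : ℕ) : ℝ)) := by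
        rw [Finset.mul_sum]
    _ ≤ 64 / d ^ 3 * Real.log N := by
        apply mul_le_mul_of_nonneg_left hsum1 (by positivity)
    _ = 64 * Real.log N / d ^ 3 := by ring
end

section
/- There exists a universal constant C > 0 such that the following holds. Let N ≥ 1, d > 0, and let X_1, …, X_N ∈ ℝ³ satisfy |X_i − X_j| ≥ d for all i ≠ j. Let x ∈ ℝ³ and let i ∈ {1, …, N} be such that |x − X_i| ≤ |x − X_j| for all j ∈ {1, …, N}. Then ∑_{j ≠ i} 1/|x − X_j|⁴ ≤ C / d⁴. -/
open Finset

open MeasureTheory Metric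
open scoped ENNReal

lemma packing_card {N : ℕ} {d : ℝ} (hd : 0 < d) {X : Fin N → EuclideanSpace ℝ (Fin 3)}
    (hX : ∀ i j : Fin N, i ≠ j → d ≤ ‖X i - X j‖) (x : EuclideanSpace ℝ (Fin 3))
    {R₁ R₂ : ℝ} (hR₁ : 0 ≤ R₁) (hR₂ : R₁ ≤ R₂) (s : Finset (Fin N))
    (hs : ∀ j ∈ s, ball (X j) (d/2) ⊆ closedBall x R₂ \ ball x R₁) :
    (s.card : ℝ) * (d/2)^3 ≤ R₂^3 - R₁^3 := by
  set μ : Measure (EuclideanSpace ℝ (Fin 3)) := volume with hμ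
  have hv0 : μ (ball (0 : EuclideanSpace ℝ (Fin 3)) 1) ≠ 0 :=
    (measure_ball_pos _ _ one_pos).ne'
  have hvt : μ (ball (0 : EuclideanSpace ℝ (Fin 3)) 1) ≠ ⊤ := measure_ball_lt_top.ne
  have hdisj : (s : Set (Fin N)).PairwiseDisjoint (fun j => ball (X j) (d/2)) := by
    intro a ha b hb hab
    refine ball_disjoint_ball ?_
    rw [dist_eq_norm]
    linarith [hX a b hab]
  have hsum : ∑ j ∈ s, μ (ball (X j) (d/2)) = μ (⋃ j ∈ s, ball (X j) (d/2)) :=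
    (measure_biUnion_finset hdisj fun j _ => measurableSet_ball).symm
  have hsub : (⋃ j ∈ s, ball (X j) (d/2)) ⊆ closedBall x R₂ \ ball x R₁ :=
    Set.iUnion₂_subset hs
  have hdiff : μ (closedBall x R₂ \ ball x R₁) = μ (closedBall x R₂) - μ (ball x R₁) :=
    measure_diff (ball_subset_closedBall.trans (closedBall_subset_closedBall hR₂))
      measurableSet_ball.nullMeasurableSet measure_ball_lt_top.ne
  have hfr : Module.finrank ℝ (EuclideanSpace ℝ (Fin 3)) = 3 := by
    simp [finrank_euclideanSpace]
  have hball : ∀ j : Fin N, μ (ball (X j) (d/2)) = ENNReal.ofReal ((d/2)^3) * μ (ball 0 1) := by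
    intro j
    rw [Measure.addHaar_ball μ (X j) (by positivity : (0:ℝ) ≤ d/2), hfr]
  have hcb : μ (closedBall x R₂) = ENNReal.ofReal (R₂^3) * μ (ball 0 1) := by
    rw [Measure.addHaar_closedBall μ x (hR₁.trans hR₂), hfr]
  have hb1 : μ (ball x R₁) = ENNReal.ofReal (R₁^3) * μ (ball 0 1) := by
    rw [Measure.addHaar_ball μ x hR₁, hfr]
  have key : (s.card : ℝ≥0∞) * (ENNReal.ofReal ((d/2)^3) * μ (ball 0 1))
      ≤ ENNReal.ofReal (R₂^3 - R₁^3) * μ (ball 0 1) := by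
    calc (s.card : ℝ≥0∞) * (ENNReal.ofReal ((d/2)^3) * μ (ball 0 1))
        = ∑ j ∈ s, μ (ball (X j) (d/2)) := by
          rw [Finset.sum_congr rfl fun j _ => hball j, Finset.sum_const, nsmul_eq_mul]
      _ ≤ μ (closedBall x R₂ \ ball x R₁) := hsum ▸ measure_mono hsub
      _ = ENNReal.ofReal (R₂^3) * μ (ball 0 1) - ENNReal.ofReal (R₁^3) * μ (ball 0 1) := by
          rw [hdiff, hcb, hb1]
      _ ≤ ENNReal.ofReal (R₂^3 - R₁^3) * μ (ball 0 1) := by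
          rw [← ENNReal.sub_mul (fun _ _ => hvt), ENNReal.ofReal_sub _ (by positivity)]
  have key2 : (s.card : ℝ≥0∞) * ENNReal.ofReal ((d/2)^3) ≤ ENNReal.ofReal (R₂^3 - R₁^3) := by
    rw [← ENNReal.mul_le_mul_iff_left hv0 hvt]
    calc (s.card : ℝ≥0∞) * ENNReal.ofReal ((d/2)^3) * μ (ball 0 1)
        = (s.card : ℝ≥0∞) * (ENNReal.ofReal ((d/2)^3) * μ (ball 0 1)) := by ring
      _ ≤ _ := key
  have : ENNReal.ofReal ((s.card : ℝ) * (d/2)^3) ≤ ENNReal.ofReal (R₂^3 - R₁^3) := by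
    rwa [ENNReal.ofReal_mul (by positivity), ENNReal.ofReal_natCast]
  have hrs : (0:ℝ) ≤ R₂^3 - R₁^3 := by
    have := pow_le_pow_left₀ hR₁ hR₂ 3
    linarith
  exact (ENNReal.ofReal_le_ofReal_iff hrs).mp this


lemma summable_aux : Summable (fun n : ℕ => 1 / ((n : ℝ) + 1) ^ 2) := by
  have h := (Real.summable_one_div_nat_pow (p := 2)).mpr one_lt_two
  have := (summable_nat_add_iff 1).mpr h
  simpa [Nat.cast_add] using this

lemma sum_one_div_sq_le (s : Finset ℕ) (hs : ∀ k ∈ s, 1 ≤ k) :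
    ∑ k ∈ s, 1 / (k:ℝ)^2 ≤ ∑' n : ℕ, 1 / ((n : ℝ) + 1) ^ 2 := by
  have heq : ∑ m ∈ s.image (fun k : ℕ => k - 1), 1/((m:ℝ)+1)^2 = ∑ k ∈ s, 1 / (k:ℝ)^2 := by
    rw [Finset.sum_image]
    · refine Finset.sum_congr rfl fun k hk => ?_
      have h1 := hs k hk
      have h2 : ((k - 1 : ℕ) : ℝ) + 1 = (k : ℝ) := by
        have h3 : k - 1 + 1 = k := Nat.succ_pred_eq_of_pos h1
        calc ((k - 1 : ℕ) : ℝ) + 1 = ((k - 1 + 1 : ℕ) : ℝ) := by push_cast; ring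
          _ = (k : ℝ) := by rw [h3]
      rw [h2]
    · intro a ha b hb hab
      have := hs a ha; have := hs b hb
      beta_reduce at hab
      omega
  rw [← heq]
  exact Summable.sum_le_tsum _ (fun n _ => by positivity) summable_aux

theorem sum_inv_dist_fourth_le :
    ∃ C : ℝ, 0 < C ∧
      ∀ (N : ℕ), 1 ≤ N → ∀ (d : ℝ), 0 < d →
        ∀ X : Fin N → EuclideanSpace ℝ (Fin 3),
          (∀ i j : Fin N, i ≠ j → d ≤ ‖X i - X j‖) →
          ∀ (x : EuclideanSpace ℝ (Fin 3)) (i : Fin N),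
            (∀ j : Fin N, ‖x - X i‖ ≤ ‖x - X j‖) →
            ∑ j ∈ Finset.univ.erase i, 1 / ‖x - X j‖ ^ 4 ≤ C / d ^ 4 := by
  set T : ℝ := ∑' n : ℕ, 1 / ((n : ℝ) + 1) ^ 2 with hT
  have hT0 : 0 ≤ T := tsum_nonneg (fun n => by positivity)
  refine ⟨432 * T + 1, by linarith, ?_⟩
  intro N hN d hd X hX x i hi
  have hhalf : ∀ j ∈ Finset.univ.erase i, d / 2 ≤ ‖x - X j‖ := by
    intro j hj
    have hji : j ≠ i := (Finset.mem_erase.mp hj).1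
    have h1 : d ≤ ‖X i - X j‖ := hX i j (Ne.symm hji)
    have h2 : ‖X i - X j‖ ≤ ‖X i - x‖ + ‖x - X j‖ := by
      have h : X i - X j = (X i - x) + (x - X j) := by abel
      rw [h]; exact norm_add_le _ _
    have h3 : ‖X i - x‖ = ‖x - X i‖ := norm_sub_rev _ _
    have h4 := hi j
    linarith
  set K : Fin N → ℕ := fun j => ⌊2 * ‖x - X j‖ / d⌋₊ with hKdef
  have hK1 : ∀ j ∈ Finset.univ.erase i, 1 ≤ K j := by
    intro j hj
    apply Nat.le_floor
    rw [Nat.cast_one, le_div_iff₀ hd]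
    linarith [hhalf j hj]
  have hKlow : ∀ j, (K j : ℝ) * (d / 2) ≤ ‖x - X j‖ := by
    intro j
    have h0 : 0 ≤ 2 * ‖x - X j‖ / d := by positivity
    have h := Nat.floor_le h0
    rw [le_div_iff₀ hd] at h
    linarith
  have hKhigh : ∀ j, ‖x - X j‖ < ((K j : ℝ) + 1) * (d / 2) := by
    intro j
    have h := Nat.lt_floor_add_one (2 * ‖x - X j‖ / d)
    rw [div_lt_iff₀ hd] at h
    linarith
  -- pointwise bound
  have hpt : ∀ j ∈ Finset.univ.erase i,
      1 / ‖x - X j‖ ^ 4 ≤ 16 / ((K j : ℝ) ^ 4 * d ^ 4) := by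
    intro j hj
    have h1 : 1 ≤ (K j : ℝ) := by exact_mod_cast hK1 j hj
    have h2 : (0:ℝ) < (K j : ℝ) * (d / 2) := by nlinarith
    have h3 : (K j : ℝ) * (d / 2) ≤ ‖x - X j‖ := hKlow j
    have h4 : ((K j : ℝ) * (d / 2)) ^ 4 ≤ ‖x - X j‖ ^ 4 := by
      apply pow_le_pow_left₀ h2.le h3
    have h5 : 1 / ‖x - X j‖ ^ 4 ≤ 1 / ((K j : ℝ) * (d / 2)) ^ 4 :=
      one_div_le_one_div_of_le (by positivity) h4
    have h6 : 1 / ((K j : ℝ) * (d / 2)) ^ 4 = 16 / ((K j : ℝ) ^ 4 * d ^ 4) := by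
      field_simp; ring
    linarith
  -- fiber cardinality bound
  have hcard : ∀ k ∈ (Finset.univ.erase i).image K,
      ((Finset.univ.erase i).filter (fun a => K a = k)).card ≤ 27 * k ^ 2 ∧ 1 ≤ k := by
    intro k hk
    obtain ⟨j₀, hj₀, hj₀k⟩ := Finset.mem_image.mp hk
    have hk1 : 1 ≤ k := hj₀k ▸ hK1 j₀ hj₀
    have hk1' : (1:ℝ) ≤ (k:ℝ) := by exact_mod_cast hk1
    set s := (Finset.univ.erase i).filter (fun a => K a = k) with hsdef
    have hR₁ : (0:ℝ) ≤ ((k:ℝ) - 1) * (d / 2) := by nlinarith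
    have hR₂ : ((k:ℝ) - 1) * (d / 2) ≤ ((k:ℝ) + 2) * (d / 2) := by nlinarith
    have hsub : ∀ j ∈ s, ball (X j) (d/2) ⊆
        closedBall x (((k:ℝ) + 2) * (d / 2)) \ ball x (((k:ℝ) - 1) * (d / 2)) := by
      intro j hj y hy
      obtain ⟨hj1, hj2⟩ := Finset.mem_filter.mp hj
      have hr1 : (k:ℝ) * (d / 2) ≤ ‖x - X j‖ := by rw [← hj2]; exact hKlow j
      have hr2 : ‖x - X j‖ < ((k:ℝ) + 1) * (d / 2) := by
        have := hKhigh j; rw [hj2] at this; linarith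
      have hdy : dist y (X j) < d / 2 := mem_ball.mp hy
      have hdx : dist x (X j) = ‖x - X j‖ := by rw [dist_eq_norm]
      constructor
      · rw [mem_closedBall]
        have := dist_triangle y (X j) x
        have hc : dist (X j) x = dist x (X j) := dist_comm _ _
        linarith [hdy, hr2]
      · rw [mem_ball]
        push_neg
        have := dist_triangle x y (X j)
        have hc : dist y (X j) = dist (X j) y := dist_comm _ _
        have hc2 : dist y x = dist x y := dist_comm _ _
        linarith
    have hp := packing_card hd hX x hR₁ hR₂ s hsub
    have hd3 : (0:ℝ) < (d/2)^3 := by positivity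
    have h9 : (s.card : ℝ) ≤ 9 * (k:ℝ)^2 + 9 * (k:ℝ) + 9 := by nlinarith
    have h27 : (s.card : ℝ) ≤ 27 * (k:ℝ)^2 := by nlinarith
    constructor
    · exact_mod_cast h27
    · exact hk1
  -- main calc
  have hd4 : (0:ℝ) < d ^ 4 := by positivity
  calc ∑ j ∈ Finset.univ.erase i, 1 / ‖x - X j‖ ^ 4
      ≤ ∑ j ∈ Finset.univ.erase i, 16 / ((K j : ℝ) ^ 4 * d ^ 4) :=
        Finset.sum_le_sum hpt
    _ = ∑ k ∈ (Finset.univ.erase i).image K,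
          ((Finset.univ.erase i).filter (fun a => K a = k)).card • (16 / ((k : ℝ) ^ 4 * d ^ 4)) :=
        Finset.sum_comp (fun k : ℕ => 16 / ((k : ℝ) ^ 4 * d ^ 4)) K
    _ ≤ ∑ k ∈ (Finset.univ.erase i).image K, (432 / d ^ 4) * (1 / (k:ℝ)^2) := by
        apply Finset.sum_le_sum
        intro k hk
        obtain ⟨hck, hk1⟩ := hcard k hk
        have hk1' : (1:ℝ) ≤ (k:ℝ) := by exact_mod_cast hk1
        rw [nsmul_eq_mul]
        have hck' : (((Finset.univ.erase i).filter (fun a => K a = k)).card : ℝ) ≤ 27 * (k:ℝ)^2 := by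
          exact_mod_cast hck
        have heq : 27 * (k:ℝ)^2 * (16 / ((k : ℝ) ^ 4 * d ^ 4)) = (432 / d ^ 4) * (1 / (k:ℝ)^2) := by
          field_simp; ring
        calc (((Finset.univ.erase i).filter (fun a => K a = k)).card : ℝ) * (16 / ((k : ℝ) ^ 4 * d ^ 4))
            ≤ 27 * (k:ℝ)^2 * (16 / ((k : ℝ) ^ 4 * d ^ 4)) := by
              apply mul_le_mul_of_nonneg_right hck' (by positivity)
          _ = (432 / d ^ 4) * (1 / (k:ℝ)^2) := heq
    _ = (432 / d ^ 4) * ∑ k ∈ (Finset.univ.erase i).image K, 1 / (k:ℝ)^2 := by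
        rw [Finset.mul_sum]
    _ ≤ (432 / d ^ 4) * T := by
        apply mul_le_mul_of_nonneg_left _ (by positivity)
        exact sum_one_div_sq_le _ (fun k hk => (hcard k hk).2)
    _ ≤ (432 * T + 1) / d ^ 4 := by
        rw [div_mul_eq_mul_div]
        gcongr
        linarith
end

section
/- Let d > 0 and let X_1, …, X_N ∈ ℝ³ satisfy X_1 = 0, |X_i − X_j| ≥ d for all i ≠ j, and |X_1| ≤ |X_2| ≤ … ≤ |X_N|. Then for every i with 2 ≤ i ≤ N one has |X_i| ≥ (d/4) · i^{1/3}. -/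
open Metric MeasureTheory
open scoped ENNReal

theorem norm_ge_of_separated_ordered (N : ℕ) (d : ℝ) (hd : 0 < d)
    (X : Fin N → EuclideanSpace ℝ (Fin 3))
    (h0 : ∀ i : Fin N, (i : ℕ) = 0 → X i = 0)
    (hsep : ∀ i j : Fin N, i ≠ j → d ≤ ‖X i - X j‖)
    (hmono : ∀ i j : Fin N, i ≤ j → ‖X i‖ ≤ ‖X j‖) :
    ∀ i : Fin N, 1 ≤ (i : ℕ) →
      (d / 4) * (((i : ℕ) + 1 : ℝ)) ^ ((1:ℝ)/3) ≤ ‖X i‖ := by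
  intro i hi
  have hN : 0 < N := i.pos
  set z : Fin N := ⟨0, hN⟩ with hz
  have hXz : X z = 0 := h0 z rfl
  have hiz : i ≠ z := by
    intro h
    rw [h] at hi
    simp [hz] at hi
  have hXid : d ≤ ‖X i‖ := by
    have := hsep i z hiz
    rwa [hXz, sub_zero] at this
  -- packing argument
  set R : ℝ := ‖X i‖ + d / 2 with hR
  have hR0 : 0 ≤ R := by positivity
  have hd2 : (0:ℝ) ≤ d / 2 := by positivity
  set S : Finset (Fin N) := Finset.Iic i with hS
  have hcard : S.card = (i : ℕ) + 1 := Fin.card_Iic i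
  have hdisj : (S : Set (Fin N)).PairwiseDisjoint
      (fun j => Metric.ball (X j) (d/2)) := by
    intro j _ k _ hjk
    apply Metric.ball_disjoint_ball
    rw [dist_eq_norm]
    have := hsep j k hjk
    linarith
  have hsub : (⋃ j ∈ S, Metric.ball (X j) (d/2)) ⊆ Metric.ball 0 R := by
    intro x hx
    simp only [Set.mem_iUnion, Metric.mem_ball] at hx
    obtain ⟨j, hjS, hxj⟩ := hx
    have hj : j ≤ i := Finset.mem_Iic.mp hjS
    have hXj : ‖X j‖ ≤ ‖X i‖ := hmono j i hj
    rw [mem_ball_zero_iff]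
    have : ‖x‖ ≤ ‖x - X j‖ + ‖X j‖ := by
      have := norm_add_le (x - X j) (X j); simpa using this
    rw [dist_eq_norm] at hxj
    rw [hR]; linarith
  have hvol : volume (⋃ j ∈ S, Metric.ball (X j) (d/2))
      = ∑ j ∈ S, volume (Metric.ball (X j) (d/2)) :=
    measure_biUnion_finset hdisj (fun j _ => measurableSet_ball)
  set c : ℝ≥0∞ := volume (Metric.ball (0 : EuclideanSpace ℝ (Fin 3)) 1) with hc
  have hball : ∀ x : EuclideanSpace ℝ (Fin 3), volume (Metric.ball x (d/2))
      = ENNReal.ofReal ((d/2) ^ 3) * c := by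
    intro x
    rw [Measure.addHaar_ball volume x hd2, finrank_euclideanSpace_fin]
  have hballR : volume (Metric.ball (0 : EuclideanSpace ℝ (Fin 3)) R)
      = ENNReal.ofReal (R ^ 3) * c := by
    rw [Measure.addHaar_ball volume 0 hR0, finrank_euclideanSpace_fin]
  have hle := measure_mono (μ := volume) hsub
  rw [hvol, hballR] at hle
  have hsum : ∑ j ∈ S, volume (Metric.ball (X j) (d/2))
      = (((i : ℕ) + 1 : ℕ) : ℝ≥0∞) * (ENNReal.ofReal ((d/2) ^ 3) * c) := by
    rw [Finset.sum_congr rfl (fun j _ => hball (X j)), Finset.sum_const, hcard,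
      nsmul_eq_mul]
  rw [hsum, ← mul_assoc] at hle
  have hc0 : c ≠ 0 := (measure_ball_pos volume _ one_pos).ne'
  have hctop : c ≠ ⊤ := measure_ball_lt_top.ne
  rw [ENNReal.mul_le_mul_iff_left hc0 hctop] at hle
  have hle' : (((i : ℕ) + 1 : ℝ)) * (d/2) ^ 3 ≤ R ^ 3 := by
    have : ENNReal.ofReal ((((i : ℕ) + 1 : ℝ)) * (d/2) ^ 3)
        ≤ ENNReal.ofReal (R ^ 3) := by
      rw [ENNReal.ofReal_mul (by positivity)]
      convert hle using 2
      push_cast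
      rw [ENNReal.ofReal_add (by positivity) (by norm_num)]
      simp
    exact (ENNReal.ofReal_le_ofReal_iff (by positivity)).mp this
  -- take cube roots
  have hkey : (((i : ℕ) + 1 : ℝ)) ^ ((1:ℝ)/3) * (d/2) ≤ R := by
    have h1 : ((((i : ℕ) + 1 : ℝ)) * (d/2) ^ 3) ^ ((1:ℝ)/3)
        ≤ (R ^ 3) ^ ((1:ℝ)/3) :=
      Real.rpow_le_rpow (by positivity) hle' (by norm_num)
    have h2 : (R ^ 3) ^ ((1:ℝ)/3) = R := by
      rw [← Real.rpow_natCast R 3, ← Real.rpow_mul hR0]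
      norm_num
    have h3 : ((((i : ℕ) + 1 : ℝ)) * (d/2) ^ 3) ^ ((1:ℝ)/3)
        = (((i : ℕ) + 1 : ℝ)) ^ ((1:ℝ)/3) * (d/2) := by
      rw [Real.mul_rpow (by positivity) (by positivity),
        ← Real.rpow_natCast (d/2) 3, ← Real.rpow_mul hd2]
      norm_num
    rw [h2, h3] at h1
    exact h1
  have ht0 : (0:ℝ) ≤ (((i : ℕ) + 1 : ℝ)) ^ ((1:ℝ)/3) := by positivity
  rw [hR] at hkey
  nlinarith [hkey, hXid, hd, ht0]
end

section
/- Let ε ∈ ℝ^{3×3} be symmetric with trace zero. Then for every x ∈ ℝ³ with x ≠ 0 and every j ∈ {1,2,3}, one has ∑_{k,i} ε_{ki} ∂_k Φ_{ij}(x) = −(3/(8π)) · x_j (x · ε x) / |x|⁵, where x · ε x = ∑_{k,i} x_k ε_{ki} x_i. -/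
set_option maxHeartbeats 1000000

open Finset

/-- The Oseen tensor `Φᵢⱼ(x) = (1/(8π)) (δᵢⱼ/|x| + xᵢxⱼ/|x|³)`. -/
noncomputable def oseen (i j : Fin 3) (x : EuclideanSpace ℝ (Fin 3)) : ℝ :=
  (1 / (8 * Real.pi)) * ((if i = j then (1:ℝ) else 0) / ‖x‖ + x i * x j / ‖x‖ ^ 3)

lemma myHasFDerivAt_norm (x : EuclideanSpace ℝ (Fin 3)) (hx : x ≠ 0) :
    HasFDerivAt (fun y : EuclideanSpace ℝ (Fin 3) => ‖y‖) (‖x‖⁻¹ • innerSL ℝ x) x := by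
  have hn : ‖x‖ ≠ 0 := norm_ne_zero_iff.2 hx
  have h2 : HasFDerivAt (fun y : EuclideanSpace ℝ (Fin 3) => ‖y‖ ^ 2)
      ((2:ℕ) • innerSL ℝ x) x := (hasStrictFDerivAt_norm_sq x).hasFDerivAt
  have hs := (Real.hasDerivAt_sqrt (by positivity : (‖x‖ ^ 2 : ℝ) ≠ 0)).comp_hasFDerivAt x h2
  rw [show ((fun t => Real.sqrt t) ∘ fun y : EuclideanSpace ℝ (Fin 3) => ‖y‖ ^ 2)
      = fun y : EuclideanSpace ℝ (Fin 3) => ‖y‖ from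
    funext fun y => Real.sqrt_sq (norm_nonneg y)] at hs
  refine hs.congr_fderiv ?_
  rw [Real.sqrt_sq (norm_nonneg x)]
  ext v
  simp [ContinuousLinearMap.smul_apply]
  field_simp

lemma fderiv_oseen_single (x : EuclideanSpace ℝ (Fin 3)) (hx : x ≠ 0) (i j k : Fin 3) :
    fderiv ℝ (oseen i j) x (EuclideanSpace.single k 1) =
      (1/(8*Real.pi)) * ((-(if i = j then (1:ℝ) else 0)) * x k / ‖x‖^3
        + ((if i = k then (1:ℝ) else 0) * x j + x i * (if k = j then (1:ℝ) else 0)) / ‖x‖^3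
        - 3 * x i * x j * x k / ‖x‖^5) := by
  have hn : ‖x‖ ≠ 0 := norm_ne_zero_iff.2 hx
  have hN := myHasFDerivAt_norm x hx
  have hinv := (hasDerivAt_inv hn).comp_hasFDerivAt x hN
  have hcube : HasFDerivAt (fun y : EuclideanSpace ℝ (Fin 3) => ‖y‖ ^ 3)
      ((3 * ‖x‖ ^ 2 : ℝ) • (‖x‖⁻¹ • innerSL ℝ x)) x := by
    simpa [Function.comp_def] using (hasDerivAt_pow 3 ‖x‖).comp_hasFDerivAt x hN
  have hcinv := (hasDerivAt_inv (by positivity : (‖x‖^3:ℝ) ≠ 0)).comp_hasFDerivAt x hcube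
  have hi : HasFDerivAt (fun y : EuclideanSpace ℝ (Fin 3) => y i)
      (EuclideanSpace.proj i : EuclideanSpace ℝ (Fin 3) →L[ℝ] ℝ) x :=
    (EuclideanSpace.proj i : EuclideanSpace ℝ (Fin 3) →L[ℝ] ℝ).hasFDerivAt
  have hj : HasFDerivAt (fun y : EuclideanSpace ℝ (Fin 3) => y j)
      (EuclideanSpace.proj j : EuclideanSpace ℝ (Fin 3) →L[ℝ] ℝ) x :=
    (EuclideanSpace.proj j : EuclideanSpace ℝ (Fin 3) →L[ℝ] ℝ).hasFDerivAt
  have hij := hi.mul hj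
  have hprod := hij.mul hcinv
  have hδ := hinv.const_mul (if i = j then (1:ℝ) else 0)
  have hsum := (hδ.add hprod).const_mul (1 / (8 * Real.pi))
  have hoe : oseen i j = fun y : EuclideanSpace ℝ (Fin 3) =>
      (1 / (8 * Real.pi)) * ((if i = j then (1:ℝ) else 0) * (‖y‖)⁻¹ +
        (y i * y j) * ((‖y‖ ^ 3)⁻¹)) := by
    funext y; simp [oseen, div_eq_mul_inv]
  simp only [Function.comp_def, Pi.add_apply, Pi.mul_apply] at hsum
  rw [hoe, hsum.fderiv]
  simp [ContinuousLinearMap.smul_apply, real_inner_comm, EuclideanSpace.inner_single_left]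
  clear hN hinv hcube hcinv hi hj hij hprod hδ hsum hoe
  simp only [ContinuousLinearMap.neg_apply,
    apply_ite (fun f : EuclideanSpace ℝ (Fin 3) →L[ℝ] ℝ => f (EuclideanSpace.single k 1)),
    ContinuousLinearMap.smul_apply, ContinuousLinearMap.zero_apply, innerSL_apply_apply,
    EuclideanSpace.inner_single_right, smul_eq_mul, RCLike.inner_apply, conj_trivial,
    one_mul, mul_one]
  split_ifs <;>
    first
      | tauto
      | (field_simp; ring)

theorem contraction_fderiv_oseen (ε : Matrix (Fin 3) (Fin 3) ℝ)
    (hsym : ε.IsSymm) (htr : Matrix.trace ε = 0)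
    (x : EuclideanSpace ℝ (Fin 3)) (hx : x ≠ 0) (j : Fin 3) :
    ∑ k : Fin 3, ∑ i : Fin 3, ε k i * fderiv ℝ (oseen i j) x (EuclideanSpace.single k 1) =
      -(3 / (8 * Real.pi)) * x j * (∑ k : Fin 3, ∑ i : Fin 3, x k * ε k i * x i) / ‖x‖ ^ 5 := by
  have hn : ‖x‖ ≠ 0 := norm_ne_zero_iff.2 hx
  have hπ : Real.pi ≠ 0 := Real.pi_ne_zero
  have e10 : ε 1 0 = ε 0 1 := by have := hsym.apply 1 0; simpa using this.symm
  have e20 : ε 2 0 = ε 0 2 := by have := hsym.apply 2 0; simpa using this.symm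
  have e21 : ε 2 1 = ε 1 2 := by have := hsym.apply 2 1; simpa using this.symm
  have e22 : ε 2 2 = -(ε 0 0 + ε 1 1) := by
    rw [Matrix.trace_fin_three] at htr; linarith
  fin_cases j <;>
  · simp only [fderiv_oseen_single x hx, Fin.sum_univ_three]
    norm_num [e10, e20, e21, e22, Fin.ext_iff]
    field_simp
    ring
end

section
/- Let ε ∈ ℝ^{3×3} be symmetric with trace zero and let R > 0. Define d : ℝ³∖{0} → ℝ³ by d(x) = (5/2) R³ x (x · ε x)/|x|⁵ + R⁵ ( ε x/|x|⁵ − (5/2) x (x · ε x)/|x|⁷ ). Then div d = 0 on ℝ³∖{0}. -/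
open Finset

/-- The `(i,j)` entry of (the matrix of) a continuous linear map on `ℝ³`;
for `A = fderiv ℝ w x` this is the partial derivative `∂ⱼ wᵢ(x)`. -/
noncomputable def entry
    (A : EuclideanSpace ℝ (Fin 3) →L[ℝ] EuclideanSpace ℝ (Fin 3)) (i j : Fin 3) : ℝ :=
  A (EuclideanSpace.single j 1) i

/-- The quadratic form `x · ε x`. -/
noncomputable def quadForm (ε : Matrix (Fin 3) (Fin 3) ℝ)
    (x : EuclideanSpace ℝ (Fin 3)) : ℝ :=
  ∑ k : Fin 3, ∑ i : Fin 3, x k * ε k i * x i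

/-- The matrix-vector product `ε x` as an element of `ℝ³`. -/
noncomputable def matVec (ε : Matrix (Fin 3) (Fin 3) ℝ)
    (x : EuclideanSpace ℝ (Fin 3)) : EuclideanSpace ℝ (Fin 3) :=
  (WithLp.equiv 2 (Fin 3 → ℝ)).symm (fun i => ∑ j : Fin 3, ε i j * x j)

/-- The explicit exterior Stokes dipole field associated to strain `ε` and radius `R`. -/
noncomputable def dipole (ε : Matrix (Fin 3) (Fin 3) ℝ) (R : ℝ)
    (x : EuclideanSpace ℝ (Fin 3)) : EuclideanSpace ℝ (Fin 3) :=
  ((5 / 2) * R ^ 3 * quadForm ε x / ‖x‖ ^ 5) • x +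
    R ^ 5 • ((1 / ‖x‖ ^ 5) • matVec ε x - ((5 / 2) * quadForm ε x / ‖x‖ ^ 7) • x)

abbrev EE := EuclideanSpace ℝ (Fin 3)

open EuclideanSpace RealInnerProductSpace in
theorem dipole_div_free (ε : Matrix (Fin 3) (Fin 3) ℝ)
    (hsym : ε.IsSymm) (htr : Matrix.trace ε = 0) (R : ℝ) (hR : 0 < R) :
    ∀ x : EuclideanSpace ℝ (Fin 3), x ≠ 0 →
      ∑ i : Fin 3, entry (fderiv ℝ (dipole ε R) x) i i = 0 := by
  intro x hx
  set M : EE →L[ℝ] EE := LinearMap.toContinuousLinearMap (Matrix.toEuclideanLin ε) with hMdef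
  have hMapp : ∀ (y : EE) (i : Fin 3), M y i = ∑ j, ε i j * y j := by
    intro y i
    simp [hMdef, Matrix.toEuclideanLin, Matrix.toLin'_apply, Matrix.mulVec, dotProduct,
      WithLp.linearEquiv]
  have hMv : ∀ y : EE, matVec ε y = M y := by
    intro y; ext i; rw [hMapp]; simp [matVec]
  have hq : ∀ y : EE, quadForm ε y = ⟪y, M y⟫ := by
    intro y
    simp only [quadForm, PiLp.inner_apply, RCLike.inner_apply, starRingEnd_apply, star_trivial,
      hMapp, Finset.mul_sum, Finset.sum_mul]
    exact Finset.sum_congr rfl fun k _ => Finset.sum_congr rfl fun i _ => by ring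
  have hnorm : ∀ y : EE, ‖y‖ = Real.sqrt ⟪y, y⟫ := by
    intro y; rw [real_inner_self_eq_norm_sq, Real.sqrt_sq (norm_nonneg y)]
  have hn0 : ‖x‖ ≠ 0 := norm_ne_zero_iff.2 hx
  have hxx : (0:ℝ) < ⟪x, x⟫ := by rw [real_inner_self_eq_norm_sq]; positivity
  have hs0 : Real.sqrt ⟪x, x⟫ ≠ 0 := by positivity
  -- rewrite the dipole field
  have hfun : dipole ε R = fun y : EE =>
      ((5/2) * R^3 * ⟪y, M y⟫ * (Real.sqrt ⟪y, y⟫ ^ 5)⁻¹) • y +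
        R^5 • ((Real.sqrt ⟪y, y⟫ ^ 5)⁻¹ • M y -
          ((5/2) * ⟪y, M y⟫ * (Real.sqrt ⟪y, y⟫ ^ 7)⁻¹) • y) := by
    funext y
    rw [dipole, hMv, hq, hnorm]
    simp only [div_eq_mul_inv, one_div, one_mul]
  -- derivatives
  have hS : HasFDerivAt (fun y : EE => ⟪y, y⟫)
      ((fderivInnerCLM ℝ (x, x)).comp ((ContinuousLinearMap.id ℝ EE).prod
        (ContinuousLinearMap.id ℝ EE))) x :=
    (hasFDerivAt_id x).inner ℝ (hasFDerivAt_id x)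
  have hQ : HasFDerivAt (fun y : EE => ⟪y, M y⟫)
      ((fderivInnerCLM ℝ (x, M x)).comp ((ContinuousLinearMap.id ℝ EE).prod M)) x :=
    (hasFDerivAt_id x).inner ℝ (M.hasFDerivAt)
  have hphi : ∀ k : ℕ, HasDerivAt (fun t : ℝ => (Real.sqrt t ^ k)⁻¹)
      (-((k:ℝ) * Real.sqrt ⟪x,x⟫ ^ (k-1) * (1 / (2 * Real.sqrt ⟪x,x⟫))) /
        (Real.sqrt ⟪x,x⟫ ^ k) ^ 2) ⟪x,x⟫ := fun k =>
    ((Real.hasDerivAt_sqrt (ne_of_gt hxx)).pow k).inv (pow_ne_zero _ hs0)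
  have hinv5 : HasFDerivAt (fun y : EE => (Real.sqrt ⟪y, y⟫ ^ 5)⁻¹)
      ((-((5:ℝ) * Real.sqrt ⟪x,x⟫ ^ (5-1) * (1 / (2 * Real.sqrt ⟪x,x⟫))) /
        (Real.sqrt ⟪x,x⟫ ^ 5) ^ 2) • ((fderivInnerCLM ℝ (x, x)).comp
          ((ContinuousLinearMap.id ℝ EE).prod (ContinuousLinearMap.id ℝ EE)))) x :=
    (hphi 5).comp_hasFDerivAt_of_eq x hS rfl
  have hinv7 : HasFDerivAt (fun y : EE => (Real.sqrt ⟪y, y⟫ ^ 7)⁻¹)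
      ((-((7:ℝ) * Real.sqrt ⟪x,x⟫ ^ (7-1) * (1 / (2 * Real.sqrt ⟪x,x⟫))) /
        (Real.sqrt ⟪x,x⟫ ^ 7) ^ 2) • ((fderivInnerCLM ℝ (x, x)).comp
          ((ContinuousLinearMap.id ℝ EE).prod (ContinuousLinearMap.id ℝ EE)))) x :=
    (hphi 7).comp_hasFDerivAt_of_eq x hS rfl
  have S1 : ∑ i : Fin 3, x i * x i = ‖x‖^2 := by
    rw [← real_inner_self_eq_norm_sq x]
    rw [PiLp.inner_apply]; simp [sq]
  have S2 : ∑ i : Fin 3, x i * M x i = ⟪x, M x⟫ := by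
    simp [PiLp.inner_apply, mul_comm]
  have htr' : ∑ i : Fin 3, ε i i = 0 := by simpa [Matrix.trace, Matrix.diag] using htr
  have hMone : ∀ i : Fin 3, M (EuclideanSpace.single i 1) i = ε i i := by
    intro i; rw [hMapp]; simp [EuclideanSpace.single_apply]
  have hMs : ∀ i : Fin 3, ⟪x, M (EuclideanSpace.single i 1)⟫ = M x i := by
    intro i
    simp only [PiLp.inner_apply, RCLike.inner_apply, starRingEnd_apply, star_trivial, hMapp,
      EuclideanSpace.single_apply, mul_ite, mul_one, mul_zero, Finset.sum_ite_eq',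
      Finset.mem_univ, if_true]
    exact Finset.sum_congr rfl fun j _ => by rw [hsym.apply i j]
  have hsq : Real.sqrt ⟪x, x⟫ = ‖x‖ := (hnorm x).symm
  have hc1 := (hQ.const_mul ((5:ℝ)/2 * R^3)).mul hinv5
  have hc3 := (hQ.const_mul ((5:ℝ)/2)).mul hinv7
  have h1 := hc1.smul (hasFDerivAt_id x)
  have h2 := hinv5.smul M.hasFDerivAt
  have h3 := hc3.smul (hasFDerivAt_id x)
  have htot : HasFDerivAt (fun y : EE =>
      ((5/2) * R^3 * ⟪y, M y⟫ * (Real.sqrt ⟪y, y⟫ ^ 5)⁻¹) • y +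
        R^5 • ((Real.sqrt ⟪y, y⟫ ^ 5)⁻¹ • M y -
          ((5/2) * ⟪y, M y⟫ * (Real.sqrt ⟪y, y⟫ ^ 7)⁻¹) • y)) _ x :=
    h1.add ((h2.sub h3).const_smul (R^5))
  rw [hfun, htot.fderiv]
  simp only [entry, ContinuousLinearMap.add_apply, ContinuousLinearMap.smul_apply,
    ContinuousLinearMap.coe_smul', Pi.smul_apply, ContinuousLinearMap.smulRight_apply,
    ContinuousLinearMap.comp_apply, ContinuousLinearMap.prod_apply,
    ContinuousLinearMap.id_apply, ContinuousLinearMap.sub_apply,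
    fderivInnerCLM_apply, PiLp.add_apply, PiLp.sub_apply, PiLp.smul_apply, smul_eq_mul,
    EuclideanSpace.single_apply, EuclideanSpace.inner_single_left,
    EuclideanSpace.inner_single_right, RCLike.inner_apply, starRingEnd_apply, star_trivial,
    ContinuousLinearMap.id_apply, hMone, hMs, hsq, id_eq, if_true, one_mul, Nat.reduceSub, Pi.mul_apply]
  have hsum : ∑ i : Fin 3,
      ((5/2 * R^3 * ⟪x, M x⟫ * (‖x‖^5)⁻¹ - R^5 * (5/2 * ⟪x, M x⟫ * (‖x‖^7)⁻¹))
        + (R^5 * (‖x‖^5)⁻¹) * ε i i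
        + (5/2 * R^3 * ⟪x, M x⟫ * (-(5 * ‖x‖^4 * (1/(2*‖x‖))) / (‖x‖^5)^2) * 2
            - R^5 * (5/2 * ⟪x, M x⟫ * (-(7 * ‖x‖^6 * (1/(2*‖x‖))) / (‖x‖^7)^2) * 2)) * (x i * x i)
        + ((‖x‖^5)⁻¹ * (5 * R^3)
            + R^5 * (-(5 * ‖x‖^4 * (1/(2*‖x‖))) / (‖x‖^5)^2 * 2 - (‖x‖^7)⁻¹ * 5)) * (x i * M x i))
      = 0 := by
    rw [Finset.sum_add_distrib, Finset.sum_add_distrib, Finset.sum_add_distrib,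
      ← Finset.mul_sum, ← Finset.mul_sum, ← Finset.mul_sum, S1, S2, htr',
      Finset.sum_const]
    simp only [Finset.card_univ, Fintype.card_fin, nsmul_eq_mul]
    field_simp
    ring
  refine Eq.trans (Finset.sum_congr rfl fun i _ => ?_) hsum
  ring
end
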